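/- Let L be a finite lattice with minimum element 0̂ and maximum element 1̂, and let μ denote the Möbius function of L. If A ⊆ L \ {0̂} is a lower crosscut of L (i.e., for every y ∈ L not in A ∪ {0̂} there exists x ∈ A with x < y), then μ(0̂, 1̂) equals the sum of (-1)^|E| over all subsets E of A whose join (supremum) equals 1̂. -/
import Mathlib


open scoped Classical

open Finset

/-- Rota's crosscut theorem, lower-crosscut form: if `A` is a lower crosscut of a
finite lattice `L`, then `μ(⊥,⊤) = ∑ (-1)^|E|` over subsets `E ⊆ A` with join `⊤`. -/
theorem stmt4 (L : Type) [Lattice L] [BoundedOrder L] [Fintype L]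
    (μ : L → L → ℤ)
    (hμ : ∀ x y : L, x ≤ y →
      (∑ᶠ z ∈ {z : L | x ≤ z ∧ z ≤ y}, μ x z) = if x = y then 1 else 0)
    (A : Set L) (hA : ⊥ ∉ A)
    (hcross : ∀ y : L, y ∉ A → y ≠ ⊥ → ∃ x ∈ A, x < y) :
    μ ⊥ ⊤ = ∑ᶠ E ∈ {E : Finset L | ↑E ⊆ A ∧ E.sup id = ⊤}, (-1 : ℤ) ^ E.card := by
  classical
  set F : L → ℤ := fun y =>
    ∑ E ∈ univ.filter (fun E : Finset L => ↑E ⊆ A ∧ E.sup id = y), (-1 : ℤ) ^ E.card with hF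
  have key : ∀ y : L, ∑ z ∈ univ.filter (· ≤ y), F z = if y = ⊥ then 1 else 0 := by
    intro y
    have h1 : ∑ z ∈ univ.filter (· ≤ y), F z
        = ∑ E ∈ univ.filter (fun E : Finset L => ↑E ⊆ A ∧ E.sup id ≤ y), (-1 : ℤ) ^ E.card := by
      rw [hF]
      rw [← Finset.sum_fiberwise_of_maps_to
        (g := fun E : Finset L => E.sup id)
        (t := univ.filter (· ≤ y)) (fun E hE => by simp at hE ⊢; exact hE.2)]
      refine Finset.sum_congr rfl fun z hz => ?_
      refine Finset.sum_congr ?_ (fun _ _ => rfl)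
      simp only [mem_filter, mem_univ, true_and] at hz
      ext E
      simp only [mem_filter, mem_univ, true_and, and_assoc]
      constructor
      · rintro ⟨hEA, h⟩; exact ⟨hEA, h.trans_le hz, h⟩
      · rintro ⟨hEA, _, h⟩; exact ⟨hEA, h⟩
    have h2 : univ.filter (fun E : Finset L => ↑E ⊆ A ∧ E.sup id ≤ y)
        = (univ.filter (fun x : L => x ∈ A ∧ x ≤ y)).powerset := by
      ext E
      simp only [mem_filter, mem_univ, true_and, mem_powerset]
      constructor
      · rintro ⟨hEA, hle⟩ x hx
        simp only [mem_filter, mem_univ, true_and]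
        exact ⟨hEA (Finset.mem_coe.mpr hx), Finset.sup_le_iff.mp hle x hx⟩
      · intro h
        constructor
        · intro x hx
          exact ((mem_filter.mp (h (Finset.mem_coe.mp hx))).2).1
        · exact Finset.sup_le fun x hx => ((mem_filter.mp (h hx)).2).2
    rw [h1, h2, Finset.sum_powerset_neg_one_pow_card]
    congr 1
    simp only [Finset.eq_empty_iff_forall_notMem, mem_filter, mem_univ, true_and, eq_iff_iff]
    constructor
    · intro h
      by_contra hy
      by_cases hyA : y ∈ A
      · exact h y ⟨hyA, le_refl y⟩
      · obtain ⟨x, hxA, hxy⟩ := hcross y hyA hy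
        exact h x ⟨hxA, hxy.le⟩
    · rintro rfl x ⟨hxA, hx⟩
      exact hA (le_bot_iff.mp hx ▸ hxA)
  have hμ' : ∀ y : L, ∑ z ∈ univ.filter (· ≤ y), μ ⊥ z = if y = ⊥ then 1 else 0 := by
    intro y
    have := hμ ⊥ y bot_le
    rw [show {z : L | ⊥ ≤ z ∧ z ≤ y} = ↑(univ.filter (· ≤ y)) by ext z; simp,
      finsum_mem_coe_finset] at this
    rw [this]
    simp [eq_comm]
  have main : ∀ y : L, μ ⊥ y = F y := by
    intro y
    induction y using WellFoundedLT.induction with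
    | ind y ih =>
      have h3 : ∑ z ∈ univ.filter (· ≤ y), (μ ⊥ z - F z) = 0 := by
        rw [Finset.sum_sub_distrib, hμ' y, key y]; ring
      have h4 : univ.filter (· ≤ y) = insert y (univ.filter (· < y)) := by
        ext z
        simp only [mem_filter, mem_univ, true_and, mem_insert]
        constructor
        · intro h; rcases eq_or_lt_of_le h with h | h
          · exact Or.inl h
          · exact Or.inr h
        · rintro (rfl | h)
          · exact le_rfl
          · exact h.le
      have hy : y ∉ univ.filter (· < y) := by simp
      rw [h4, Finset.sum_insert hy] at h3
      have h5 : ∑ z ∈ univ.filter (· < y), (μ ⊥ z - F z) = 0 :=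
        Finset.sum_eq_zero fun z hz => by
          simp only [mem_filter, mem_univ, true_and] at hz
          rw [ih z hz]; ring
      rw [h5, add_zero, sub_eq_zero] at h3
      exact h3
  rw [main ⊤, hF]
  rw [show {E : Finset L | ↑E ⊆ A ∧ E.sup id = ⊤}
      = ↑(univ.filter (fun E : Finset L => ↑E ⊆ A ∧ E.sup id = ⊤)) by ext E; simp,
    finsum_mem_coe_finset]
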